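/- The Gram matrix G_2 (a 3 × 3 matrix, since a 2-element set has exactly three 2-ramified partitions) has determinant det G_2 = Q₁³ Q₂⁴ (Q₁ − 1)(Q₂ − 1) in ℤ[Q₁,Q₂]. -/

import Mathlib

attribute [local instance] Classical.propDecidable

namespace RamifiedGram

instance setoidFinite {α : Type*} [Finite α] : Finite (Setoid α) :=
  Finite.of_injective (fun s => s.r) (fun s t h => by cases s; cases t; cases h; rfl)

/-- The 2-ramified partitions of `Fin n`: pairs of equivalence relations
`(a₁, a₂)` with `a₁ ≤ a₂` (`a₁` refines `a₂`). -/
def RamPart (n : ℕ) : Type := {p : Setoid (Fin n) × Setoid (Fin n) // p.1 ≤ p.2}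

noncomputable instance (n : ℕ) : Fintype (RamPart n) := by
  unfold RamPart; exact Fintype.ofFinite _

/-- The Gram matrix `G_n` over `ℤ[Q₁,Q₂]` (with `Q₁ = X 0`, `Q₂ = X 1`):
the `(a,b)` entry is `Q₁^{k(a,b)} Q₂^{h(a,b)}` where `k(a,b)` is the number of
parts of the join `a₂ ∨ b₂` of the coarser components and `h(a,b)` is the
number of parts of the join `a₁ ∨ b₁` of the finer components. -/
noncomputable def gram (n : ℕ) : Matrix (RamPart n) (RamPart n) (MvPolynomial (Fin 2) ℤ) :=
  fun a b =>
    MvPolynomial.X 0 ^ Nat.card (Quotient (a.1.2 ⊔ b.1.2)) *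
    MvPolynomial.X 1 ^ Nat.card (Quotient (a.1.1 ⊔ b.1.1))

end RamifiedGram

namespace RamifiedGram

open MvPolynomial

lemma setoid_fin2 (s : Setoid (Fin 2)) : s = ⊥ ∨ s = ⊤ := by
  by_cases h : s 0 1
  · right
    rw [Setoid.eq_top_iff]
    intro x y
    fin_cases x <;> fin_cases y
    · exact s.refl _
    · exact h
    · exact s.symm h
    · exact s.refl _
  · left
    ext x y
    simp only [Setoid.bot_def]
    constructor
    · intro hxy
      by_contra hne
      fin_cases x <;> fin_cases y <;> simp_all
      exact h (s.symm hxy)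
    · rintro rfl; exact s.refl _

lemma bot_ne_top' : (⊥ : Setoid (Fin 2)) ≠ ⊤ := by
  intro h
  have : (⊥ : Setoid (Fin 2)) 0 1 := h ▸ trivial
  simp at this

lemma card_quot_bot : Nat.card (Quotient (⊥ : Setoid (Fin 2))) = 2 := by
  have e : Quotient (⊥ : Setoid (Fin 2)) ≃ Fin 2 :=
    Equiv.ofBijective (Quotient.lift id (fun a b h => h))
      ⟨fun a b => Quotient.inductionOn₂ a b (fun x y h => Quotient.sound h),
       fun x => ⟨Quotient.mk _ x, rfl⟩⟩
  rw [Nat.card_congr e]; simp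

lemma card_quot_top : Nat.card (Quotient (⊤ : Setoid (Fin 2))) = 1 := by
  haveI : Subsingleton (Quotient (⊤ : Setoid (Fin 2))) :=
    ⟨fun a b => Quotient.inductionOn₂ a b fun x y => Quotient.sound trivial⟩
  haveI : Nonempty (Quotient (⊤ : Setoid (Fin 2))) := ⟨Quotient.mk _ 0⟩
  exact Nat.card_eq_one_iff_unique.mpr ⟨inferInstance, inferInstance⟩

noncomputable def ramEquiv : Fin 3 ≃ RamPart 2 where
  toFun := ![⟨(⊥, ⊥), le_refl _⟩, ⟨(⊥, ⊤), bot_le⟩, ⟨(⊤, ⊤), le_refl _⟩]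
  invFun p := if p.1.1 = ⊤ then 2 else if p.1.2 = ⊤ then 1 else 0
  left_inv i := by fin_cases i <;> simp [bot_ne_top']
  right_inv p := by
    obtain ⟨⟨a, b⟩, hle⟩ := p
    rcases setoid_fin2 a with rfl | rfl <;> rcases setoid_fin2 b with rfl | rfl
    · simp [bot_ne_top']; rfl
    · simp [bot_ne_top']; rfl
    · exact absurd (le_bot_iff.mp hle) (fun h => bot_ne_top' h.symm)
    · simp; rfl

/-- a 2-element set has exactly three 2-ramified partitions, and
`det G_2 = Q₁³ Q₂⁴ (Q₁ − 1)(Q₂ − 1)` in `ℤ[Q₁,Q₂]`. -/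
theorem gram_two_det :
    Nat.card (RamPart 2) = 3 ∧
    (gram 2).det =
      X 0 ^ 3 * X 1 ^ 4 * (X 0 - 1) * (X 1 - 1) := by
  constructor
  · rw [Nat.card_congr ramEquiv.symm]; simp
  · rw [← Matrix.det_submatrix_equiv_self ramEquiv, Matrix.det_fin_three]
    simp only [Matrix.submatrix_apply, ramEquiv, Equiv.coe_fn_mk, Matrix.cons_val_zero,
      Matrix.cons_val_one, Matrix.head_cons, Matrix.cons_val_two, Matrix.tail_cons, gram,
      sup_idem, bot_sup_eq, sup_bot_eq, top_sup_eq, sup_top_eq, card_quot_bot, card_quot_top,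
      Matrix.cons_val]
    ring

end RamifiedGram
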